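/- Let G be a finite simple graph on n vertices and let E_cs be an edge contraction set of size n − r such that the contraction G_r = G ⫽ E_cs is edge-matching and node-removal equivalent (G_r = G \ V_S for some V_S ⊆ V(G)). Then G_r is Laplacian-interlacing with G: λ_k(L(G)) ≤ λ_k(L(G_r)) ≤ λ_{n−r+k}(L(G)) for k = 1,…,r. -/

import Mathlib

/-- The `k`-th smallest eigenvalue of a real matrix (eigenvalues sorted ascending);
junk value `0` if the matrix is not Hermitian (i.e. not symmetric, over `ℝ`). -/
noncomputable def sortedEig {m : ℕ} (A : Matrix (Fin m) (Fin m) ℝ) : Fin m → ℝ :=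
  if h : A.IsHermitian then fun k => h.eigenvalues (Tuple.sort h.eigenvalues k) else fun _ => 0

/-- `B` (of size `r`) interlaces `A` (of size `n`, `r < n`):
`λ_k(A) ≤ λ_k(B) ≤ λ_{n-r+k}(A)` for `k = 1, …, r` (0-indexed here). -/
def Interlaces {r n : ℕ} (hrn : r < n) (B : Matrix (Fin r) (Fin r) ℝ)
    (A : Matrix (Fin n) (Fin n) ℝ) : Prop :=
  ∀ k : Fin r,
    sortedEig A ⟨k.1, lt_trans k.isLt hrn⟩ ≤ sortedEig B k ∧
    sortedEig B k ≤ sortedEig A ⟨n - r + k.1, by have := k.isLt; omega⟩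
/-- The simple graph contraction of `G` over the partition of its vertex set given by the
fibers of `f` (cells are fibers): distinct cells are adjacent iff some pair of their members
is adjacent in `G` (self-loops and duplicate edges removed). -/
def contraction {V W : Type*} (G : SimpleGraph V) (f : V → W) : SimpleGraph W where
  Adj i j := i ≠ j ∧ ∃ u v, f u = i ∧ f v = j ∧ G.Adj u v
  symm := ⟨fun _ _ ⟨hne, u, v, hu, hv, h⟩ => ⟨hne.symm, v, u, hv, hu, h.symm⟩⟩
  loopless := ⟨fun _ ⟨h, _⟩ => h rfl⟩

/-- The edge-based contraction `G ⫽ E_cs`: the contraction of `G` over the partition of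
`V(G)` into connected components of the graph `(V(G), E_cs)`. -/
def contractionE {V : Type*} (G : SimpleGraph V) (Ecs : Set (Sym2 V)) :
    SimpleGraph (SimpleGraph.fromEdgeSet Ecs).ConnectedComponent :=
  contraction G (SimpleGraph.fromEdgeSet Ecs).connectedComponentMk

open Classical in
/-- The graph Laplacian (degree matrix minus adjacency matrix), as a real matrix. -/
noncomputable def lapMat {V : Type*} (H : SimpleGraph V) : Matrix V V ℝ :=
  fun u v => if u = v then ((H.neighborSet u).ncard : ℝ) else if H.Adj u v then -1 else 0

open Matrix

lemma sorted_unfold {m : ℕ} {A : Matrix (Fin m) (Fin m) ℝ} (hA : A.IsHermitian) (k : Fin m) :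
    sortedEig A k = hA.eigenvalues (Tuple.sort hA.eigenvalues k) := by
  rw [sortedEig, dif_pos hA]

open Matrix

section Eig

variable {m : ℕ} {A : Matrix (Fin m) (Fin m) ℝ} (hA : A.IsHermitian)

lemma vecMul_eq_transpose_mulVec (V : Matrix (Fin m) (Fin m) ℝ) (w : Fin m → ℝ) :
    w ᵥ* V = Vᵀ *ᵥ w := by
  ext i; simp [vecMul, mulVec, dotProduct, transpose, mul_comm]

lemma star_coe_eigenvectorUnitary :
    (star (hA.eigenvectorUnitary : Matrix (Fin m) (Fin m) ℝ)) =
      ((hA.eigenvectorUnitary : Matrix (Fin m) (Fin m) ℝ))ᵀ := by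
  rw [Matrix.star_eq_conjTranspose, Matrix.conjTranspose_eq_transpose_of_trivial]

lemma quad_eq_sum (w : Fin m → ℝ) :
    w ⬝ᵥ A *ᵥ w = ∑ i, hA.eigenvalues i *
      ((star (hA.eigenvectorUnitary : Matrix (Fin m) (Fin m) ℝ) *ᵥ w) i) ^ 2 := by
  set V := (hA.eigenvectorUnitary : Matrix (Fin m) (Fin m) ℝ) with hV
  set c := star V *ᵥ w with hc
  conv_lhs => rw [hA.spectral_theorem, Unitary.conjStarAlgAut_apply]
  rw [← Matrix.mulVec_mulVec, ← Matrix.mulVec_mulVec, Matrix.dotProduct_mulVec,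
    vecMul_eq_transpose_mulVec, ← star_coe_eigenvectorUnitary hA, ← hV, ← hc]
  simp only [RCLike.ofReal_real_eq_id]
  rw [show (Matrix.diagonal (id ∘ hA.eigenvalues) : Matrix (Fin m) (Fin m) ℝ) *ᵥ c
      = fun i => hA.eigenvalues i * c i from by ext i; simp [Matrix.mulVec_diagonal]]
  simp [dotProduct]
  ring_nf
  congr 1; ext i; ring

lemma mulVec_star_unitary (w : Fin m → ℝ) :
    (hA.eigenvectorUnitary : Matrix (Fin m) (Fin m) ℝ) *ᵥ
      (star (hA.eigenvectorUnitary : Matrix (Fin m) (Fin m) ℝ) *ᵥ w) = w := by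
  rw [Matrix.mulVec_mulVec]
  have h : (hA.eigenvectorUnitary : Matrix (Fin m) (Fin m) ℝ) *
      star (hA.eigenvectorUnitary : Matrix (Fin m) (Fin m) ℝ) = 1 :=
    Unitary.mul_star_self_of_mem hA.eigenvectorUnitary.2
  rw [h, Matrix.one_mulVec]

lemma dot_eq_sum (w : Fin m → ℝ) :
    w ⬝ᵥ w = ∑ i, ((star (hA.eigenvectorUnitary : Matrix (Fin m) (Fin m) ℝ) *ᵥ w) i) ^ 2 := by
  set V := (hA.eigenvectorUnitary : Matrix (Fin m) (Fin m) ℝ) with hV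
  set c := star V *ᵥ w with hc
  have hw : w = V *ᵥ c := (mulVec_star_unitary hA w).symm
  conv_lhs => rw [hw]
  rw [Matrix.dotProduct_mulVec, vecMul_eq_transpose_mulVec, ← star_coe_eigenvectorUnitary hA,
    ← hV]
  have : star V *ᵥ (V *ᵥ c) = c := by
    rw [Matrix.mulVec_mulVec]
    have h : star V * V = 1 := Unitary.star_mul_self_of_mem hA.eigenvectorUnitary.2
    rw [h, Matrix.one_mulVec]
  rw [this]
  simp [dotProduct, pow_two]

end Eig


section Ext

variable {q r : ℕ}

/-- extension by zero along an injection, as a linear map -/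
noncomputable def extL (emb : Fin q → Fin r) : (Fin q → ℝ) →ₗ[ℝ] (Fin r → ℝ) where
  toFun a := fun i => ∑ j, if i = emb j then a j else 0
  map_add' a b := by
    ext i
    simp only [Pi.add_apply]
    rw [← Finset.sum_add_distrib]
    exact Finset.sum_congr rfl fun j _ => by split <;> simp
  map_smul' t a := by
    ext i
    simp only [Pi.smul_apply, smul_eq_mul, RingHom.id_apply]
    rw [Finset.mul_sum]
    exact Finset.sum_congr rfl fun j _ => by split <;> simp

lemma extL_apply_emb (emb : Fin q → Fin r) (hemb : Function.Injective emb)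
    (a : Fin q → ℝ) (j : Fin q) : extL emb a (emb j) = a j := by
  simp only [extL, LinearMap.coe_mk, AddHom.coe_mk, hemb.eq_iff]
  simp

lemma extL_apply_not_mem (emb : Fin q → Fin r) (a : Fin q → ℝ) (i : Fin r)
    (hi : ∀ j, i ≠ emb j) : extL emb a i = 0 := by
  simp only [extL, LinearMap.coe_mk, AddHom.coe_mk]
  exact Finset.sum_eq_zero fun j _ => by simp [hi j]

lemma sum_ext (emb : Fin q → Fin r) (hemb : Function.Injective emb)
    (g : Fin r → ℝ → ℝ) (hg : ∀ i, g i 0 = 0) (a : Fin q → ℝ) :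
    ∑ i, g i (extL emb a i) = ∑ j, g (emb j) (a j) := by
  have h1 : ∑ i, g i (extL emb a i) = ∑ i ∈ Finset.univ.image emb, g i (extL emb a i) := by
    refine (Finset.sum_subset (Finset.subset_univ _) ?_).symm
    intro x _ hx
    rw [extL_apply_not_mem emb a x, hg]
    intro j hj; exact hx (by simp [hj])
  rw [h1, Finset.sum_image (fun x _ y _ h => hemb h)]
  exact Finset.sum_congr rfl fun j _ => by rw [extL_apply_emb emb hemb]

lemma exists_ker_ne_zero {a b : ℕ} (hba : b < a) (f : (Fin a → ℝ) →ₗ[ℝ] (Fin b → ℝ)) :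
    ∃ x, x ≠ 0 ∧ f x = 0 := by
  by_contra h
  push_neg at h
  have hinj : Function.Injective f := by
    rw [injective_iff_map_eq_zero]
    intro x hx
    by_contra hx0
    exact (h x hx0) hx
  have := LinearMap.finrank_le_finrank_of_injective hinj
  rw [Module.finrank_fintype_fun_eq_card, Module.finrank_fintype_fun_eq_card] at this
  simp at this
  omega

end Ext

section Interlace

lemma interlace_lower {n r : ℕ} {A : Matrix (Fin n) (Fin n) ℝ} {B : Matrix (Fin r) (Fin r) ℝ}
    (hA : A.IsHermitian) (hB : B.IsHermitian) (hApsd : A.PosSemidef) (hBpsd : B.PosSemidef)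
    (J : (Fin r → ℝ) →ₗ[ℝ] (Fin n → ℝ))
    (hquad : ∀ x, (J x) ⬝ᵥ A *ᵥ (J x) = x ⬝ᵥ B *ᵥ x)
    (hnorm : ∀ x : Fin r → ℝ, x ⬝ᵥ x ≤ (J x) ⬝ᵥ (J x))
    (k : Fin r) (hkn : (k : ℕ) < n) :
    sortedEig A ⟨k, hkn⟩ ≤ sortedEig B k := by
  classical
  set σA := Tuple.sort hA.eigenvalues with hσA
  set σB := Tuple.sort hB.eigenvalues with hσB
  set VA := (hA.eigenvectorUnitary : Matrix (Fin n) (Fin n) ℝ) with hVA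
  set VB := (hB.eigenvectorUnitary : Matrix (Fin r) (Fin r) ℝ) with hVB
  have hk1 : (k : ℕ) + 1 ≤ r := k.isLt
  set embB : Fin (k + 1) → Fin r := fun j => σB (Fin.castLE hk1 j) with hembB
  have hembBinj : Function.Injective embB := fun a b h =>
    Fin.castLE_injective hk1 (σB.injective h)
  set embA : Fin k → Fin n := fun i => σA ⟨i.1, lt_trans i.isLt hkn⟩ with hembA
  obtain ⟨a, ha0, hker⟩ := exists_ker_ne_zero (Nat.lt_succ_self _)
    ((LinearMap.funLeft ℝ ℝ embA ∘ₗ Matrix.mulVecLin (star VA)) ∘ₗ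
      (J ∘ₗ Matrix.mulVecLin VB ∘ₗ extL embB))
  set ta := extL embB a with hta
  set x := VB *ᵥ ta with hx
  set w := J x with hw
  have hcB : star VB *ᵥ x = ta := by
    rw [hx, Matrix.mulVec_mulVec, Unitary.star_mul_self_of_mem hB.eigenvectorUnitary.2,
      Matrix.one_mulVec]
  have hcAzero : ∀ i : Fin k, (star VA *ᵥ w) (embA i) = 0 := by
    intro i
    have h := congrFun hker i
    simpa using h
  have hquadB : x ⬝ᵥ B *ᵥ x = ∑ j : Fin (k + 1), hB.eigenvalues (embB j) * (a j) ^ 2 := by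
    rw [quad_eq_sum hB, ← hVB, hcB]
    exact sum_ext embB hembBinj (fun i t => hB.eigenvalues i * t ^ 2) (by simp) a
  have hdotx : x ⬝ᵥ x = ∑ j, (a j) ^ 2 := by
    rw [dot_eq_sum hB, ← hVB, hcB]
    exact sum_ext embB hembBinj (fun _ t => t ^ 2) (by simp) a
  have hS : 0 < x ⬝ᵥ x := by
    rw [hdotx]
    obtain ⟨j, hj⟩ := Function.ne_iff.mp ha0
    exact Finset.sum_pos' (fun j _ => sq_nonneg _)
      ⟨j, Finset.mem_univ j, (sq_nonneg _).lt_of_ne (Ne.symm (pow_ne_zero 2 hj))⟩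
  have hμA0 : 0 ≤ sortedEig A ⟨k, hkn⟩ := by
    rw [sorted_unfold hA]; exact hApsd.eigenvalues_nonneg _
  have hupB : x ⬝ᵥ B *ᵥ x ≤ sortedEig B k * (x ⬝ᵥ x) := by
    rw [hquadB, hdotx, Finset.mul_sum]
    refine Finset.sum_le_sum fun j _ => mul_le_mul_of_nonneg_right ?_ (sq_nonneg _)
    rw [sorted_unfold hB]
    have hmono := Tuple.monotone_sort hB.eigenvalues
      (show (Fin.castLE hk1 j) ≤ k by
        rw [Fin.le_def]; simpa using Nat.lt_succ_iff.mp j.isLt)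
    simpa [hembB] using hmono
  have hlowA : sortedEig A ⟨k, hkn⟩ * (w ⬝ᵥ w) ≤ w ⬝ᵥ A *ᵥ w := by
    rw [quad_eq_sum hA, dot_eq_sum hA, ← hVA, Finset.mul_sum]
    refine Finset.sum_le_sum fun i _ => ?_
    by_cases hc : (star VA *ᵥ w) i = 0
    · simp [hc]
    · refine mul_le_mul_of_nonneg_right ?_ (sq_nonneg _)
      set i' := σA.symm i with hi'
      have hik : ¬ (i'.1 < (k : ℕ)) := by
        intro hlt
        apply hc
        have h0 := hcAzero ⟨i'.1, hlt⟩
        have heq : embA ⟨i'.1, hlt⟩ = i := by simp [hembA, hi']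
        rwa [heq] at h0
      rw [sorted_unfold hA]
      have hle : (⟨k, hkn⟩ : Fin n) ≤ i' := by
        rw [Fin.le_def]
        simpa using Nat.le_of_not_lt hik
      have hmono := Tuple.monotone_sort hA.eigenvalues hle
      have : hA.eigenvalues (σA i') = hA.eigenvalues i := by rw [hi', Equiv.apply_symm_apply]
      exact le_trans hmono this.le
  have hchain : sortedEig A ⟨k, hkn⟩ * (x ⬝ᵥ x) ≤ sortedEig B k * (x ⬝ᵥ x) := by
    calc sortedEig A ⟨k, hkn⟩ * (x ⬝ᵥ x)
        ≤ sortedEig A ⟨k, hkn⟩ * (w ⬝ᵥ w) := mul_le_mul_of_nonneg_left (hnorm x) hμA0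
      _ ≤ w ⬝ᵥ A *ᵥ w := hlowA
      _ = x ⬝ᵥ B *ᵥ x := hquad x
      _ ≤ sortedEig B k * (x ⬝ᵥ x) := hupB
  exact le_of_mul_le_mul_right hchain hS

end Interlace

lemma interlace_upper {n r : ℕ} {A : Matrix (Fin n) (Fin n) ℝ} {B : Matrix (Fin r) (Fin r) ℝ}
    (hA : A.IsHermitian) (hB : B.IsHermitian)
    (J : (Fin r → ℝ) →ₗ[ℝ] (Fin n → ℝ))
    (hquad : ∀ x : Fin r → ℝ, x ⬝ᵥ B *ᵥ x ≤ (J x) ⬝ᵥ A *ᵥ (J x))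
    (hnorm : ∀ x : Fin r → ℝ, (J x) ⬝ᵥ (J x) = x ⬝ᵥ x)
    (k : Fin r) (hrn : r ≤ n) (hkn : n - r + k.1 < n) :
    sortedEig B k ≤ sortedEig A ⟨n - r + k.1, hkn⟩ := by
  classical
  set σA := Tuple.sort hA.eigenvalues with hσA
  set σB := Tuple.sort hB.eigenvalues with hσB
  set VA := (hA.eigenvectorUnitary : Matrix (Fin n) (Fin n) ℝ) with hVA
  set VB := (hB.eigenvectorUnitary : Matrix (Fin r) (Fin r) ℝ) with hVB
  have hkr : (k : ℕ) < r := k.isLt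
  set embB : Fin (r - k) → Fin r := fun j => σB ⟨k + j.1, by omega⟩ with hembB
  have hembBinj : Function.Injective embB := by
    intro a b h
    have := σB.injective h
    have h2 := congrArg Fin.val this
    simp only [Fin.val_mk] at h2
    exact Fin.ext (by omega)
  set embA : Fin (r - k - 1) → Fin n := fun i => σA ⟨n - r + k + 1 + i.1, by omega⟩ with hembA
  obtain ⟨a, ha0, hker⟩ := exists_ker_ne_zero (show r - k - 1 < r - k by omega)
    ((LinearMap.funLeft ℝ ℝ embA ∘ₗ Matrix.mulVecLin (star VA)) ∘ₗ
      (J ∘ₗ Matrix.mulVecLin VB ∘ₗ extL embB))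
  set ta := extL embB a with hta
  set x := VB *ᵥ ta with hx
  set w := J x with hw
  have hcB : star VB *ᵥ x = ta := by
    rw [hx, Matrix.mulVec_mulVec, Unitary.star_mul_self_of_mem hB.eigenvectorUnitary.2,
      Matrix.one_mulVec]
  have hcAzero : ∀ i : Fin (r - k - 1), (star VA *ᵥ w) (embA i) = 0 := by
    intro i
    have h := congrFun hker i
    simpa using h
  have hquadB : x ⬝ᵥ B *ᵥ x = ∑ j : Fin (r - k), hB.eigenvalues (embB j) * (a j) ^ 2 := by
    rw [quad_eq_sum hB, ← hVB, hcB]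
    exact sum_ext embB hembBinj (fun i t => hB.eigenvalues i * t ^ 2) (by simp) a
  have hdotx : x ⬝ᵥ x = ∑ j, (a j) ^ 2 := by
    rw [dot_eq_sum hB, ← hVB, hcB]
    exact sum_ext embB hembBinj (fun _ t => t ^ 2) (by simp) a
  have hS : 0 < x ⬝ᵥ x := by
    rw [hdotx]
    obtain ⟨j, hj⟩ := Function.ne_iff.mp ha0
    exact Finset.sum_pos' (fun j _ => sq_nonneg _)
      ⟨j, Finset.mem_univ j, (sq_nonneg _).lt_of_ne (Ne.symm (pow_ne_zero 2 hj))⟩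
  have hlowB : sortedEig B k * (x ⬝ᵥ x) ≤ x ⬝ᵥ B *ᵥ x := by
    rw [hquadB, hdotx, Finset.mul_sum]
    refine Finset.sum_le_sum fun j _ => mul_le_mul_of_nonneg_right ?_ (sq_nonneg _)
    rw [sorted_unfold hB]
    have hle : k ≤ (⟨k + j.1, by omega⟩ : Fin r) := by
      rw [Fin.le_def]; simp
    have hmono := Tuple.monotone_sort hB.eigenvalues hle
    simpa [hembB, hσB] using hmono
  have hupA : w ⬝ᵥ A *ᵥ w ≤ sortedEig A ⟨n - r + k.1, hkn⟩ * (w ⬝ᵥ w) := by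
    rw [quad_eq_sum hA, dot_eq_sum hA, ← hVA, Finset.mul_sum]
    refine Finset.sum_le_sum fun i _ => ?_
    by_cases hc : (star VA *ᵥ w) i = 0
    · simp [hc]
    · refine mul_le_mul_of_nonneg_right ?_ (sq_nonneg _)
      set i' := σA.symm i with hi'
      have hik : ¬ (n - r + k.1 < i'.1) := by
        intro hlt
        apply hc
        have hival : i'.1 = n - r + k + 1 + (i'.1 - (n - r + k + 1)) := by omega
        have hit : i'.1 - (n - r + k + 1) < r - k - 1 := by
          have := i'.isLt; omega
        have h0 := hcAzero ⟨i'.1 - (n - r + k + 1), hit⟩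
        have heq : embA ⟨i'.1 - (n - r + k + 1), hit⟩ = i := by
          simp only [hembA]
          have : (⟨n - r + k + 1 + (i'.1 - (n - r + k + 1)), by omega⟩ : Fin n) = i' := by
            apply Fin.ext
            show n - r + k + 1 + (i'.1 - (n - r + k + 1)) = i'.1
            omega
          rw [this, hi', Equiv.apply_symm_apply]
        rwa [heq] at h0
      rw [sorted_unfold hA]
      have hle : i' ≤ (⟨n - r + k.1, hkn⟩ : Fin n) := by
        rw [Fin.le_def]
        simpa using Nat.le_of_not_lt hik
      have hmono := Tuple.monotone_sort hA.eigenvalues hle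
      have hieq : hA.eigenvalues (σA i') = hA.eigenvalues i := by
        rw [hi', Equiv.apply_symm_apply]
      exact le_trans hieq.symm.le hmono
  have hchain : sortedEig B k * (x ⬝ᵥ x) ≤ sortedEig A ⟨n - r + k.1, hkn⟩ * (x ⬝ᵥ x) := by
    calc sortedEig B k * (x ⬝ᵥ x)
        ≤ x ⬝ᵥ B *ᵥ x := hlowB
      _ ≤ w ⬝ᵥ A *ᵥ w := hquad x
      _ ≤ sortedEig A ⟨n - r + k.1, hkn⟩ * (w ⬝ᵥ w) := hupA
      _ = sortedEig A ⟨n - r + k.1, hkn⟩ * (x ⬝ᵥ x) := by rw [hnorm x]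
  exact le_of_mul_le_mul_right hchain hS

section Graph

open SimpleGraph

lemma lapMat_eq {V : Type*} [Fintype V] [DecidableEq V] (H : SimpleGraph V)
    [DecidableRel H.Adj] : lapMat H = H.lapMatrix ℝ := by
  ext u v
  by_cases huv : u = v
  · subst huv
    simp only [lapMat, if_pos rfl, lapMatrix, degMatrix, Matrix.sub_apply,
      Matrix.diagonal_apply_eq, adjMatrix_apply, if_neg (H.irrefl), sub_zero]
    rw [degree, neighborFinset, Set.ncard_eq_toFinset_card']
    simp
  · simp only [lapMat, if_neg huv, lapMatrix, degMatrix, Matrix.sub_apply,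
      Matrix.diagonal_apply_ne _ huv, adjMatrix_apply, zero_sub]
    by_cases h : H.Adj u v <;> simp [h]

lemma quad_lapMatrix {V : Type*} [Fintype V] [DecidableEq V] (H : SimpleGraph V)
    [DecidableRel H.Adj] (x : V → ℝ) :
    x ⬝ᵥ (H.lapMatrix ℝ) *ᵥ x =
      (∑ i, ∑ j, if H.Adj i j then (x i - x j) ^ 2 else 0) / 2 := by
  rw [← Matrix.toLinearMap₂'_apply', SimpleGraph.lapMatrix_toLinearMap₂']

lemma lapMat_map_iso {V W : Type*} {H : SimpleGraph V} {H' : SimpleGraph W} (φ : H ≃g H') :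
    lapMat H = (lapMat H').submatrix φ φ := by
  ext u v
  rw [Matrix.submatrix_apply]
  by_cases huv : u = v
  · subst huv
    rw [lapMat, lapMat, if_pos rfl, if_pos rfl]
    congr 1
    rw [← Nat.card_coe_set_eq, ← Nat.card_coe_set_eq]
    exact Nat.card_congr (φ.mapNeighborSet u)
  · have hne : φ u ≠ φ v := fun h => huv (φ.toEquiv.injective h)
    rw [lapMat, lapMat, if_neg huv, if_neg hne]
    by_cases h : H.Adj u v
    · rw [if_pos h, if_pos (φ.map_adj_iff.mpr h)]
    · rw [if_neg h, if_neg (fun hh => h (φ.map_adj_iff.mp hh))]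

lemma dot_submatrix {α β : Type*} [Fintype α] [Fintype β] (g : β ≃ α) (M : Matrix α α ℝ)
    (y : β → ℝ) :
    y ⬝ᵥ (M.submatrix g g) *ᵥ y = (y ∘ g.symm) ⬝ᵥ M *ᵥ (y ∘ g.symm) := by
  rw [Matrix.submatrix_mulVec_equiv]
  unfold dotProduct
  exact Fintype.sum_equiv g (fun b => y b * ((M *ᵥ (y ∘ g.symm)) ∘ g) b)
    (fun a => (y ∘ g.symm) a * (M *ᵥ (y ∘ g.symm)) a)
    (fun b => by simp [Function.comp])

lemma sum_subtype_set {α M : Type*} [Fintype α] [AddCommMonoid M] (s : Finset α) (f : α → M) :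
    ∑ x : (↑s : Set α), f ↑x = ∑ x ∈ s, f x := by
  rw [← Finset.sum_coe_sort s f]
  exact Fintype.sum_equiv (Equiv.subtypeEquivRight (fun x => Iff.rfl)) _ _ (fun x => rfl)

lemma sum_subtype_set' {α M : Type*} [Fintype α] [AddCommMonoid M] (s : Finset α)
    (W : Set α) (hW : ∀ x, x ∈ W ↔ x ∈ s) [Fintype W] (f : α → M) :
    ∑ x : W, f ↑x = ∑ x ∈ s, f x := by
  rw [← Finset.sum_coe_sort s f]
  exact Fintype.sum_equiv (Equiv.subtypeEquivRight hW) _ _ (fun x => rfl)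

end Graph

/-- If the contraction `G_r = G ⫽ E_cs` (with `|E_cs| = n - r`, `r < n`)
is edge-matching and node-removal equivalent (`G_r ≅ G \ V_S`), then `G_r` is
Laplacian-interlacing with `G`: `λ_k(L(G)) ≤ λ_k(L(G_r)) ≤ λ_{n−r+k}(L(G))`. -/
theorem laplacian_interlacing_node_removal_contraction {n r : ℕ} (hrn : r < n)
    (G : SimpleGraph (Fin n))
    (Ecs : Set (Sym2 (Fin n))) (hE : Ecs ⊆ G.edgeSet) (hcard : Nat.card Ecs = n - r)
    (hem : Nat.card (G.edgeSet \ Ecs : Set (Sym2 (Fin n))) =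
      Nat.card (contractionE G Ecs).edgeSet)
    (VS : Finset (Fin n))
    (hnr : Nonempty (contractionE G Ecs ≃g G.induce (↑(VSᶜ) : Set (Fin n))))
    (e : (SimpleGraph.fromEdgeSet Ecs).ConnectedComponent ≃ Fin r) :
    Interlaces hrn ((lapMat (contractionE G Ecs)).submatrix e.symm e.symm) (lapMat G) := by
  classical
  set κ : Fin n → (SimpleGraph.fromEdgeSet Ecs).ConnectedComponent :=
    (SimpleGraph.fromEdgeSet Ecs).connectedComponentMk with hκ
  haveI : Fintype (SimpleGraph.fromEdgeSet Ecs).ConnectedComponent :=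
    Fintype.ofEquiv (Fin r) e.symm
  set Gc := contractionE G Ecs with hGc
  set A := lapMat G with hAdef
  set B := (lapMat Gc).submatrix e.symm e.symm with hBdef
  have hApsd : A.PosSemidef := by
    rw [hAdef, lapMat_eq]; exact SimpleGraph.posSemidef_lapMatrix ℝ G
  have hBpsd : B.PosSemidef := by
    rw [hBdef, lapMat_eq]
    exact (SimpleGraph.posSemidef_lapMatrix ℝ Gc).submatrix e.symm
  have hA : A.IsHermitian := hApsd.1
  have hB : B.IsHermitian := hBpsd.1
  have hκEcs : ∀ u v : Fin n, s(u, v) ∈ Ecs → κ u = κ v := by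
    intro u v hs
    by_cases huv : u = v
    · rw [huv]
    · exact SimpleGraph.ConnectedComponent.sound
        (((SimpleGraph.fromEdgeSet_adj Ecs).mpr ⟨hs, huv⟩ : (SimpleGraph.fromEdgeSet Ecs).Adj u v).reachable)
  set D : Finset (Sym2 (Fin n)) := G.edgeFinset.filter (fun s => s ∉ Ecs) with hD
  set T : Finset (Sym2 (SimpleGraph.fromEdgeSet Ecs).ConnectedComponent) := Gc.edgeFinset with hT
  set mφ : Sym2 (Fin n) → Sym2 (SimpleGraph.fromEdgeSet Ecs).ConnectedComponent := Sym2.map κ with hmφ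
  have hTsub : T ⊆ D.image mφ := by
    intro s hs
    induction s with
    | _ a b =>
      rw [hT, SimpleGraph.mem_edgeFinset, SimpleGraph.mem_edgeSet] at hs
      obtain ⟨hne, u, v, hu, hv, huv⟩ := hs
      refine Finset.mem_image.mpr ⟨s(u, v), ?_, ?_⟩
      · rw [hD, Finset.mem_filter]
        exact ⟨SimpleGraph.mem_edgeFinset.mpr huv,
          fun hmem => hne (hu ▸ hv ▸ (hκEcs u v hmem))⟩
      · rw [hmφ]
        simp only [Sym2.map_pair_eq]
        rw [show κ u = a from hu, show κ v = b from hv]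
  have hcardD : D.card = Nat.card (G.edgeSet \ Ecs : Set (Sym2 (Fin n))) := by
    have hset : (G.edgeSet \ Ecs : Set (Sym2 (Fin n))) = ↑D := by
      ext s
      simp [hD, Set.mem_diff, SimpleGraph.mem_edgeFinset]
    rw [hset, Nat.card_coe_set_eq, Set.ncard_coe_finset]
  have hcardT : T.card = Nat.card Gc.edgeSet := by
    rw [← Set.ncard_coe_finset, hT, SimpleGraph.coe_edgeFinset, Nat.card_coe_set_eq]
  have hcardEq : T.card = D.card := by rw [hcardT, hcardD, hem]
  have h1 : D.card ≤ (D.image mφ).card := hcardEq ▸ Finset.card_le_card hTsub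
  have hinj : Set.InjOn mφ ↑D :=
    Finset.injOn_of_card_image_eq (le_antisymm Finset.card_image_le h1)
  have himg : T = D.image mφ :=
    Finset.eq_of_subset_of_card_le hTsub (Finset.card_image_le.trans hcardEq.symm.le)
  have hmemT : ∀ s ∈ D, mφ s ∈ T := fun s hs => himg ▸ Finset.mem_image_of_mem mφ hs
  have hdist : ∀ u v : Fin n, G.Adj u v → s(u, v) ∉ Ecs → κ u ≠ κ v := by
    intro u v hadj hne hk
    have hsD : s(u, v) ∈ D := by
      rw [hD, Finset.mem_filter]; exact ⟨SimpleGraph.mem_edgeFinset.mpr hadj, hne⟩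
    have hmem := hmemT _ hsD
    rw [hT, SimpleGraph.mem_edgeFinset] at hmem
    apply Gc.not_isDiag_of_mem_edgeSet hmem
    rw [hmφ]
    simp only [Sym2.map_pair_eq]
    rw [hk]
    exact Sym2.mk_isDiag_iff.mpr rfl
  have hpair : ∀ z : (SimpleGraph.fromEdgeSet Ecs).ConnectedComponent → ℝ,
      (∑ a, ∑ b, if Gc.Adj a b then (z a - z b) ^ 2 else 0)
        = ∑ u, ∑ v, if G.Adj u v then (z (κ u) - z (κ v)) ^ 2 else 0 := by
    intro z
    have hL : (∑ a, ∑ b, if Gc.Adj a b then (z a - z b) ^ 2 else 0)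
        = ∑ p ∈ (Finset.univ ×ˢ Finset.univ).filter
            (fun p : (SimpleGraph.fromEdgeSet Ecs).ConnectedComponent × (SimpleGraph.fromEdgeSet Ecs).ConnectedComponent => Gc.Adj p.1 p.2),
            (z p.1 - z p.2) ^ 2 := by
      rw [Finset.sum_filter]
      exact (Finset.sum_product' (s := Finset.univ) (t := Finset.univ)
        (f := fun a b => if Gc.Adj a b then (z a - z b) ^ 2 else 0)).symm
    have hR : (∑ u, ∑ v, if G.Adj u v then (z (κ u) - z (κ v)) ^ 2 else 0)
        = ∑ p ∈ (Finset.univ ×ˢ Finset.univ).filter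
            (fun p : Fin n × Fin n => G.Adj p.1 p.2),
            (z (κ p.1) - z (κ p.2)) ^ 2 := by
      rw [Finset.sum_filter]
      exact (Finset.sum_product' (s := Finset.univ) (t := Finset.univ)
        (f := fun u v => if G.Adj u v then (z (κ u) - z (κ v)) ^ 2 else 0)).symm
    rw [hL, hR]
    set PG := (Finset.univ ×ˢ Finset.univ).filter
      (fun p : Fin n × Fin n => G.Adj p.1 p.2) with hPG
    rw [← Finset.sum_filter_add_sum_filter_not PG (fun p => s(p.1, p.2) ∈ Ecs)
      (fun p => (z (κ p.1) - z (κ p.2)) ^ 2)]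
    have hzero : ∑ p ∈ PG.filter (fun p => s(p.1, p.2) ∈ Ecs),
        (z (κ p.1) - z (κ p.2)) ^ 2 = 0 := by
      refine Finset.sum_eq_zero fun p hp => ?_
      rw [Finset.mem_filter] at hp
      rw [hκEcs p.1 p.2 hp.2]
      simp
    rw [hzero, zero_add]
    refine (Finset.sum_bij (fun p _ => (κ p.1, κ p.2)) ?_ ?_ ?_ ?_).symm
    · intro p hp
      rw [Finset.mem_filter] at hp
      obtain ⟨hpg, hne⟩ := hp
      rw [hPG, Finset.mem_filter] at hpg
      rw [Finset.mem_filter]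
      refine ⟨Finset.mem_product.mpr ⟨Finset.mem_univ _, Finset.mem_univ _⟩, ?_⟩
      exact ⟨hdist p.1 p.2 hpg.2 hne, p.1, p.2, rfl, rfl, hpg.2⟩
    · intro p hp q hq heq
      rw [Finset.mem_filter, hPG, Finset.mem_filter] at hp hq
      have hpD : s(p.1, p.2) ∈ D := by
        rw [hD, Finset.mem_filter]
        exact ⟨SimpleGraph.mem_edgeFinset.mpr hp.1.2, hp.2⟩
      have hqD : s(q.1, q.2) ∈ D := by
        rw [hD, Finset.mem_filter]
        exact ⟨SimpleGraph.mem_edgeFinset.mpr hq.1.2, hq.2⟩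
      obtain ⟨h1', h2'⟩ := Prod.mk.injEq .. ▸ (show (κ p.1, κ p.2) = (κ q.1, κ q.2) from heq)
      have hmm : mφ s(p.1, p.2) = mφ s(q.1, q.2) := by
        rw [hmφ]
        simp only [Sym2.map_pair_eq]
        rw [h1', h2']
      have hss := hinj hpD hqD hmm
      rw [Sym2.eq_iff] at hss
      rcases hss with ⟨h1, h2⟩ | ⟨h1, h2⟩
      · exact Prod.ext h1 h2
      · exact absurd ((congrArg κ h1).trans h2'.symm) (hdist p.1 p.2 hp.1.2 hp.2)
    · intro q hq
      rw [Finset.mem_filter] at hq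
      obtain ⟨-, hne, u, v, hu, hv, huv⟩ := hq
      have hnE : s(u, v) ∉ Ecs := fun hmem => hne (hu ▸ hv ▸ hκEcs u v hmem)
      refine ⟨(u, v), ?_, Prod.ext hu hv⟩
      rw [Finset.mem_filter, hPG, Finset.mem_filter]
      exact ⟨⟨Finset.mem_product.mpr ⟨Finset.mem_univ _, Finset.mem_univ _⟩, huv⟩, hnE⟩
    · intro p hp; rfl
  -- left inequality data
  set J₁ : (Fin r → ℝ) →ₗ[ℝ] (Fin n → ℝ) :=
    { toFun := fun y => fun v => y (e (κ v)),
      map_add' := fun _ _ => rfl,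
      map_smul' := fun _ _ => rfl } with hJ₁
  have hquad1 : ∀ y : Fin r → ℝ, (J₁ y) ⬝ᵥ A *ᵥ (J₁ y) = y ⬝ᵥ B *ᵥ y := by
    intro y
    rw [hBdef, dot_submatrix e.symm, hAdef, lapMat_eq, lapMat_eq, quad_lapMatrix,
      quad_lapMatrix, Equiv.symm_symm, hpair (y ∘ e)]
    rfl
  have hnorm1 : ∀ y : Fin r → ℝ, y ⬝ᵥ y ≤ (J₁ y) ⬝ᵥ (J₁ y) := by
    intro y
    have hrep : ∀ k : Fin r, ∃ v : Fin n, e (κ v) = k := by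
      intro k
      obtain ⟨v, hv⟩ := (e.symm k).exists_rep
      exact ⟨v, by rw [show κ v = e.symm k from hv, Equiv.apply_symm_apply]⟩
    choose ρ hρ using hrep
    have hρinj : Function.Injective ρ := fun a b h => by rw [← hρ a, ← hρ b, h]
    unfold dotProduct
    have hre : ∑ k, y k * y k = ∑ v ∈ Finset.univ.image ρ, (J₁ y v) * (J₁ y v) := by
      rw [Finset.sum_image (fun a _ b _ h => hρinj h)]
      exact Finset.sum_congr rfl fun k _ => by simp [hJ₁, hρ k]
    rw [hre]
    exact Finset.sum_le_sum_of_subset_of_nonneg (Finset.subset_univ _)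
      (fun v _ _ => mul_self_nonneg _)
  -- right inequality data
  obtain ⟨φ⟩ := hnr
  set W : Set (Fin n) := (↑(VSᶜ) : Set (Fin n)) with hW
  set ψ : Fin r ≃ W := e.symm.trans φ.toEquiv with hψ
  have hWmem : ∀ x, x ∈ W ↔ x ∈ VSᶜ := fun x => by rw [hW]; exact Finset.mem_coe
  have hBW : B = (lapMat (G.induce W)).submatrix ψ ψ := by
    rw [hBdef, lapMat_map_iso φ, Matrix.submatrix_submatrix]
    rfl
  set J₂ : (Fin r → ℝ) →ₗ[ℝ] (Fin n → ℝ) :=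
    { toFun := fun y => fun v => if h : v ∈ W then y (ψ.symm ⟨v, h⟩) else 0,
      map_add' := by intro y y'; ext v; by_cases h : v ∈ W <;> simp [h],
      map_smul' := by intro t y; ext v; by_cases h : v ∈ W <;> simp [h] } with hJ₂
  have hJ₂W : ∀ (y : Fin r → ℝ) (w : W), J₂ y ↑w = y (ψ.symm w) := by
    intro y w
    simp only [hJ₂, LinearMap.coe_mk, AddHom.coe_mk]
    rw [dif_pos w.2, Subtype.coe_eta]
  have hnorm2 : ∀ y : Fin r → ℝ, (J₂ y) ⬝ᵥ (J₂ y) = y ⬝ᵥ y := by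
    intro y
    unfold dotProduct
    have hzero : ∀ v ∈ Finset.univ, v ∉ VSᶜ → J₂ y v * J₂ y v = 0 := by
      intro v _ hv
      have hv0 : J₂ y v = 0 := by
        simp only [hJ₂, LinearMap.coe_mk, AddHom.coe_mk]
        rw [dif_neg]
        exact fun h => hv h
      rw [hv0]; ring
    rw [← Finset.sum_subset (Finset.subset_univ (VSᶜ)) hzero]
    rw [← sum_subtype_set' (VSᶜ) W hWmem (fun v => J₂ y v * J₂ y v)]
    rw [show (∑ x : W, J₂ y ↑x * J₂ y ↑x)
        = ∑ x : W, y (ψ.symm x) * y (ψ.symm x) from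
      Finset.sum_congr rfl fun x _ => by rw [hJ₂W]]
    exact Equiv.sum_comp ψ.symm (fun k => y k * y k)
  have hquad2 : ∀ y : Fin r → ℝ, y ⬝ᵥ B *ᵥ y ≤ (J₂ y) ⬝ᵥ A *ᵥ (J₂ y) := by
    intro y
    rw [hBW, dot_submatrix ψ, hAdef, lapMat_eq, lapMat_eq, quad_lapMatrix, quad_lapMatrix]
    have hkey : (∑ w : W, ∑ w' : W,
        if (G.induce W).Adj w w' then ((y ∘ ψ.symm) w - (y ∘ ψ.symm) w') ^ 2 else 0)
        ≤ ∑ u, ∑ v, if G.Adj u v then (J₂ y u - J₂ y v) ^ 2 else 0 := by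
      have hterm : ∀ w w' : W,
          (if (G.induce W).Adj w w' then ((y ∘ ψ.symm) w - (y ∘ ψ.symm) w') ^ 2 else 0)
          = (if G.Adj ↑w ↑w' then (J₂ y ↑w - J₂ y ↑w') ^ 2 else 0) := by
        intro w w'
        rw [show ((y ∘ ψ.symm) w : ℝ) = J₂ y ↑w from (hJ₂W y w).symm,
          show ((y ∘ ψ.symm) w' : ℝ) = J₂ y ↑w' from (hJ₂W y w').symm]
        exact if_congr (SimpleGraph.comap_adj) rfl rfl
      calc (∑ w : W, ∑ w' : W,
          if (G.induce W).Adj w w' then ((y ∘ ψ.symm) w - (y ∘ ψ.symm) w') ^ 2 else 0)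
          = ∑ w : W, ∑ w' : W, (if G.Adj ↑w ↑w' then (J₂ y ↑w - J₂ y ↑w') ^ 2 else 0) := by
            exact Finset.sum_congr rfl fun w _ => Finset.sum_congr rfl fun w' _ => hterm w w'
        _ = ∑ u ∈ VSᶜ, ∑ v ∈ VSᶜ, (if G.Adj u v then (J₂ y u - J₂ y v) ^ 2 else 0) := by
            rw [show (∑ w : W, ∑ w' : W, (if G.Adj ↑w ↑w' then (J₂ y ↑w - J₂ y ↑w') ^ 2 else 0))
                = ∑ w : W, ∑ v ∈ VSᶜ, (if G.Adj ↑w v then (J₂ y ↑w - J₂ y v) ^ 2 else 0) from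
              Finset.sum_congr rfl fun w _ => sum_subtype_set' (VSᶜ) W hWmem
                (fun v => if G.Adj ↑w v then (J₂ y ↑w - J₂ y v) ^ 2 else 0)]
            exact sum_subtype_set' (VSᶜ) W hWmem
              (fun u => ∑ v ∈ VSᶜ, if G.Adj u v then (J₂ y u - J₂ y v) ^ 2 else 0)
        _ ≤ ∑ u ∈ VSᶜ, ∑ v, (if G.Adj u v then (J₂ y u - J₂ y v) ^ 2 else 0) := by
            refine Finset.sum_le_sum fun u _ => ?_
            refine Finset.sum_le_sum_of_subset_of_nonneg (Finset.subset_univ _) ?_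
            intro v _ _
            split <;> positivity
        _ ≤ ∑ u, ∑ v, (if G.Adj u v then (J₂ y u - J₂ y v) ^ 2 else 0) := by
            refine Finset.sum_le_sum_of_subset_of_nonneg (Finset.subset_univ _) ?_
            intro u _ _
            refine Finset.sum_nonneg fun v _ => ?_
            split <;> positivity
    linarith
  intro k
  constructor
  · exact interlace_lower hA hB hApsd hBpsd J₁ hquad1 hnorm1 k (lt_trans k.isLt hrn)
  · exact interlace_upper hA hB J₂ hquad2 hnorm2 k (le_of_lt hrn) (by omega)
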